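/- Let ψ : ℝ³ → ℝ be a C³ harmonic function (Δψ = 0), let a : ℝ → ℝ be differentiable, and set u(x,t) = a(t)∇ψ(x) and p(x,t) = −a'(t)ψ(x) − ½a(t)²|∇ψ(x)|². Then (u, p) satisfies the Navier–Stokes equations pointwise: ∂_t u − Δu + (u·∇)u + ∇p = 0 and div u = 0. -/

import Mathlib

open scoped BigOperators

private lemma fderiv_apply_fderiv {f : (Fin 3 → ℝ) → ℝ} {x : Fin 3 → ℝ}
    (hf : DifferentiableAt ℝ (fderiv ℝ f) x) (v w : Fin 3 → ℝ) :
    fderiv ℝ (fun y => fderiv ℝ f y v) x w = fderiv ℝ (fderiv ℝ f) x w v := by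
  have h : (fun y => fderiv ℝ f y v)
      = fun y => (fderiv ℝ f y) ((fun _ => v) y) := rfl
  rw [h, fderiv_clm_apply hf (differentiableAt_const v)]
  simp

private lemma clairaut {f : (Fin 3 → ℝ) → ℝ} (hf : ContDiff ℝ 2 f) (x v w : Fin 3 → ℝ) :
    fderiv ℝ (fun y => fderiv ℝ f y v) x w = fderiv ℝ (fun y => fderiv ℝ f y w) x v := by
  have hd : DifferentiableAt ℝ (fderiv ℝ f) x :=
    ((hf.fderiv_right (m := 1) (by norm_num)).differentiable one_ne_zero) x
  rw [fderiv_apply_fderiv hd, fderiv_apply_fderiv hd]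
  exact ((hf.contDiffAt).isSymmSndFDerivAt (by norm_num)).eq w v

theorem potential_like_solution (ψ : (Fin 3 → ℝ) → ℝ) (hψ : ContDiff ℝ 3 ψ)
    (hharm : ∀ x : Fin 3 → ℝ,
      ∑ j : Fin 3,
        fderiv ℝ (fun y => fderiv ℝ ψ y (Pi.single j 1)) x (Pi.single j 1) = 0)
    (a : ℝ → ℝ) (ha : Differentiable ℝ a)
    (u : Fin 3 → (Fin 3 → ℝ) → ℝ → ℝ) (p : (Fin 3 → ℝ) → ℝ → ℝ)
    (hu : ∀ i x t, u i x t = a t * fderiv ℝ ψ x (Pi.single i 1))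
    (hp : ∀ x t, p x t = -(deriv a t) * ψ x -
      (1 / 2) * (a t) ^ 2 * ∑ j : Fin 3, (fderiv ℝ ψ x (Pi.single j 1)) ^ 2) :
    (∀ (i : Fin 3) (x : Fin 3 → ℝ) (t : ℝ),
        deriv (fun s => u i x s) t -
          (∑ j : Fin 3,
            fderiv ℝ (fun y => fderiv ℝ (fun z => u i z t) y (Pi.single j 1)) x
              (Pi.single j 1)) +
          (∑ j : Fin 3, u j x t * fderiv ℝ (fun y => u i y t) x (Pi.single j 1)) +
          fderiv ℝ (fun y => p y t) x (Pi.single i 1) = 0) ∧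
    (∀ (x : Fin 3 → ℝ) (t : ℝ),
        ∑ i : Fin 3, fderiv ℝ (fun y => u i y t) x (Pi.single i 1) = 0) := by
  -- notation
  set e : Fin 3 → (Fin 3 → ℝ) := fun i => Pi.single i 1 with he
  have hψ2 : ContDiff ℝ 2 ψ := hψ.of_le (by norm_num)
  -- first derivatives are C²
  have hdψ : ∀ i, ContDiff ℝ 2 (fun y => fderiv ℝ ψ y (e i)) := fun i =>
    (hψ.fderiv_right (m := 2) (by norm_num)).clm_apply contDiff_const
  have hdψdiff : ∀ i, Differentiable ℝ (fun y => fderiv ℝ ψ y (e i)) := fun i =>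
    (hdψ i).differentiable (by norm_num)
  -- second derivative functions are C¹ hence differentiable
  have hddψ : ∀ i j, Differentiable ℝ
      (fun y => fderiv ℝ (fun z => fderiv ℝ ψ z (e i)) y (e j)) := fun i j =>
    (((hdψ i).fderiv_right (m := 1) (by norm_num)).clm_apply contDiff_const).differentiable
      one_ne_zero
  -- rewrite u spatially
  have hufun : ∀ i t, (fun y => u i y t) = fun y => a t * fderiv ℝ ψ y (e i) := by
    intro i t; funext y; exact hu i y t
  constructor
  · intro i x t
    -- time derivative
    have h1 : deriv (fun s => u i x s) t = deriv a t * fderiv ℝ ψ x (e i) := by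
      have : (fun s => u i x s) = fun s => a s * fderiv ℝ ψ x (e i) := by
        funext s; exact hu i x s
      rw [this, deriv_mul_const (ha t)]
    -- gradient of u i in direction e j
    have hgrad : ∀ (t' : ℝ) (j : Fin 3) (x' : Fin 3 → ℝ),
        fderiv ℝ (fun y => u i y t') x' (e j)
          = a t' * fderiv ℝ (fun y => fderiv ℝ ψ y (e i)) x' (e j) := by
      intro t' j x'
      rw [hufun i t', fderiv_const_mul ((hdψdiff i) x')]
      simp
    -- Laplacian term
    have h2 : (∑ j : Fin 3,
        fderiv ℝ (fun y => fderiv ℝ (fun z => u i z t) y (e j)) x (e j)) = 0 := by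
      have hinner : ∀ j : Fin 3, (fun y => fderiv ℝ (fun z => u i z t) y (e j))
          = fun y => a t * fderiv ℝ (fun z => fderiv ℝ ψ z (e i)) y (e j) := by
        intro j; funext y
        rw [hufun i t, fderiv_const_mul ((hdψdiff i) y)]
        simp
      have hsum : ∀ j : Fin 3,
          fderiv ℝ (fun y => fderiv ℝ (fun z => u i z t) y (e j)) x (e j)
            = a t * fderiv ℝ (fun y => fderiv ℝ (fun z => fderiv ℝ ψ z (e i)) y (e j)) x
                (e j) := by
        intro j
        rw [hinner j, fderiv_const_mul ((hddψ i j) x)]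
        simp
      -- swap derivatives: ∂_j∂_j∂_iψ = ∂_i∂_j∂_jψ
      have hswap : ∀ j : Fin 3,
          fderiv ℝ (fun y => fderiv ℝ (fun z => fderiv ℝ ψ z (e i)) y (e j)) x (e j)
            = fderiv ℝ (fun y => fderiv ℝ (fun z => fderiv ℝ ψ z (e j)) y (e j)) x (e i) := by
        intro j
        have hfun : (fun y => fderiv ℝ (fun z => fderiv ℝ ψ z (e i)) y (e j))
            = fun y => fderiv ℝ (fun z => fderiv ℝ ψ z (e j)) y (e i) := by
          funext y; exact clairaut hψ2 y (e i) (e j)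
        rw [hfun]
        exact clairaut (hdψ j) x (e i) (e j)
      have hlast : (∑ j : Fin 3,
          fderiv ℝ (fun y => fderiv ℝ (fun z => fderiv ℝ ψ z (e j)) y (e j)) x (e i)) = 0 := by
        rw [← ContinuousLinearMap.sum_apply, ← fderiv_fun_sum (fun j _ => (hddψ j j) x)]
        have : (fun y => ∑ j : Fin 3,
            fderiv ℝ (fun z => fderiv ℝ ψ z (e j)) y (e j)) = fun _ => (0 : ℝ) := by
          funext y; exact hharm y
        rw [this, fderiv_fun_const]
        simp
      calc (∑ j : Fin 3,
          fderiv ℝ (fun y => fderiv ℝ (fun z => u i z t) y (e j)) x (e j))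
          = a t * ∑ j : Fin 3,
            fderiv ℝ (fun y => fderiv ℝ (fun z => fderiv ℝ ψ z (e j)) y (e j)) x (e i) := by
            rw [Finset.mul_sum]
            exact Finset.sum_congr rfl fun j _ => by rw [hsum j, hswap j]
        _ = 0 := by rw [hlast, mul_zero]
    -- pressure gradient
    have h4 : fderiv ℝ (fun y => p y t) x (e i)
        = -(deriv a t) * fderiv ℝ ψ x (e i)
          - (a t) ^ 2 * ∑ j : Fin 3,
              fderiv ℝ ψ x (e j) * fderiv ℝ (fun y => fderiv ℝ ψ y (e i)) x (e j) := by
      have hpfun : (fun y => p y t)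
          = fun y => -(deriv a t) * ψ y
            - (1/2) * (a t)^2 * ∑ j : Fin 3, (fderiv ℝ ψ y (e j))^2 := by
        funext y; exact hp y t
      have hψd : DifferentiableAt ℝ ψ x := (hψ.differentiable (by norm_num)) x
      have hsqd : ∀ j : Fin 3, DifferentiableAt ℝ (fun y => (fderiv ℝ ψ y (e j))^2) x :=
        fun j => ((hdψdiff j) x).pow 2
      have hSd : DifferentiableAt ℝ (fun y => ∑ j : Fin 3, (fderiv ℝ ψ y (e j))^2) x :=
        DifferentiableAt.fun_sum fun j _ => hsqd j
      rw [hpfun, fderiv_fun_sub (hψd.const_mul _) (hSd.const_mul _)]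
      simp only [ContinuousLinearMap.coe_sub', Pi.sub_apply]
      rw [fderiv_const_mul hψd, fderiv_const_mul hSd]
      simp only [ContinuousLinearMap.coe_smul', Pi.smul_apply, smul_eq_mul]
      have hSder : fderiv ℝ (fun y => ∑ j : Fin 3, (fderiv ℝ ψ y (e j))^2) x (e i)
          = ∑ j : Fin 3, 2 * (fderiv ℝ ψ x (e j)
              * fderiv ℝ (fun y => fderiv ℝ ψ y (e i)) x (e j)) := by
        rw [fderiv_fun_sum (fun j _ => hsqd j)]
        rw [ContinuousLinearMap.sum_apply]
        refine Finset.sum_congr rfl fun j _ => ?_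
        have hsq : (fun y => (fderiv ℝ ψ y (e j))^2)
            = fun y => (fderiv ℝ ψ y (e j)) * (fderiv ℝ ψ y (e j)) := by
          funext y; ring
        rw [hsq, fderiv_fun_mul ((hdψdiff j) x) ((hdψdiff j) x)]
        have hcl := clairaut hψ2 x (e j) (e i)
        simp only [ContinuousLinearMap.add_apply, ContinuousLinearMap.coe_smul',
          Pi.smul_apply, smul_eq_mul]
        rw [hcl]; ring
      rw [hSder]
      rw [Finset.mul_sum, Finset.mul_sum]
      congr 1
      exact Finset.sum_congr rfl fun j _ => by ring
    -- convection term
    have h3 : (∑ j : Fin 3, u j x t * fderiv ℝ (fun y => u i y t) x (e j))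
        = (a t) ^ 2 * ∑ j : Fin 3,
            fderiv ℝ ψ x (e j) * fderiv ℝ (fun y => fderiv ℝ ψ y (e i)) x (e j) := by
      rw [Finset.mul_sum]
      refine Finset.sum_congr rfl fun j _ => ?_
      rw [hu j x t, hgrad t j x]; ring
    rw [h1, h2, h3, h4]; ring
  · intro x t
    have : ∀ i : Fin 3, fderiv ℝ (fun y => u i y t) x (e i)
        = a t * fderiv ℝ (fun y => fderiv ℝ ψ y (e i)) x (e i) := by
      intro i
      rw [hufun i t, fderiv_const_mul ((hdψdiff i) x)]
      simp
    rw [Finset.sum_congr rfl fun i _ => this i, ← Finset.mul_sum, hharm x, mul_zero]
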